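/- A discrete abelian group G is torsion if and only if its Pontryagin dual Hom(G, ℝ/ℤ) with the compact-open topology is a profinite group. -/

import Mathlib

open Set Topology Complex

section Helpers

/-- For a discrete domain, the compact-open topology is the topology of pointwise
convergence. -/
lemma isInducing_coeFn_pi {X Y : Type*} [TopologicalSpace X] [DiscreteTopology X]
    [TopologicalSpace Y] :
    IsInducing (fun f : C(X, Y) => (f : X → Y)) := by
  constructor
  refine le_antisymm (continuous_iff_le_induced.mp
    (continuous_pi fun x => continuous_eval_const x)) ?_
  rw [ContinuousMap.compactOpen_eq]
  refine le_generateFrom ?_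
  rintro s ⟨K, hK, U, hU, rfl⟩
  rw [isOpen_induced_iff]
  exact ⟨K.pi fun _ => U, isOpen_set_pi hK.finite_of_discrete fun _ _ => hU,
    by ext f; simp [Set.mem_pi, MapsTo]⟩

/-- The coercion of the Pontryagin dual of a discrete group into the product space is
inducing. -/
lemma isInducing_pontryaginDual_coe {A : Type*} [Monoid A] [TopologicalSpace A]
    [DiscreteTopology A] :
    IsInducing (fun χ : PontryaginDual A => (fun a => χ a : A → Circle)) :=
  isInducing_coeFn_pi.comp (ContinuousMonoidHom.isInducing_toContinuousMap A Circle)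

lemma continuous_pontryaginDual_eval {A : Type*} [Monoid A] [TopologicalSpace A]
    [DiscreteTopology A] (a : A) :
    Continuous (fun χ : PontryaginDual A => χ a) :=
  (continuous_apply a).comp isInducing_pontryaginDual_coe.continuous

/-- Evaluation at a point as a monoid hom on the Pontryagin dual. -/
noncomputable def pontryaginDualEvalHom {A : Type*} [Monoid A] [TopologicalSpace A] (a : A) :
    PontryaginDual A →* Circle where
  toFun χ := χ a
  map_one' := rfl
  map_mul' _ _ := rfl

/-- A power lemma for `Circle.exp`. -/
lemma Circle.exp_nat_mul (t : ℝ) (n : ℕ) : Circle.exp t ^ n = Circle.exp (n * t) := by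
  induction n with
  | zero => simp [Circle.exp_zero]
  | succ n ih =>
      rw [pow_succ, ih, ← Circle.exp_add]
      congr 1
      push_cast
      ring

lemma Circle.re_coe (w : Circle) : (w : ℂ).re = Real.cos (arg (w : ℂ)) := by
  conv_lhs => rw [← Circle.exp_arg w]
  rw [Circle.coe_exp, Complex.exp_ofReal_mul_I_re]

/-- Auxiliary: if `w` has a positive argument and all natural powers of `w` have real part
greater than `1/2`, we get a contradiction. -/
lemma aux_pos_arg (w : Circle) (hθ : 0 < arg (w : ℂ))
    (h : ∀ n : ℕ, (1 : ℝ) / 2 < ((w ^ n : Circle) : ℂ).re) : False := by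
  set θ := arg (w : ℂ) with hθdef
  have hθπ : θ ≤ Real.pi := Complex.arg_le_pi _
  have h1 : (1 : ℝ) / 2 < Real.cos θ := by
    have := h 1
    rwa [pow_one, Circle.re_coe] at this
  have hπ3 : θ < Real.pi / 3 := by
    by_contra hc
    push_neg at hc
    have : Real.cos θ ≤ Real.cos (Real.pi / 3) := by
      rcases eq_or_lt_of_le hc with hca | hca
      · rw [hca]
      · exact (Real.cos_lt_cos_of_nonneg_of_le_pi (by positivity) hθπ hca).le
    rw [Real.cos_pi_div_three] at this
    linarith
  set n : ℕ := ⌊Real.pi / 3 / θ⌋₊ + 1 with hn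
  have hlow : Real.pi / 3 < n * θ := by
    have := Nat.lt_floor_add_one (Real.pi / 3 / θ)
    calc Real.pi / 3 = Real.pi / 3 / θ * θ := (div_mul_cancel₀ _ hθ.ne').symm
    _ < (⌊Real.pi / 3 / θ⌋₊ + 1) * θ := by
        apply mul_lt_mul_of_pos_right _ hθ
        exact_mod_cast this
    _ = n * θ := by push_cast [hn]; ring
  have hhigh : (n : ℝ) * θ < 2 * Real.pi / 3 := by
    have hfl : (⌊Real.pi / 3 / θ⌋₊ : ℝ) * θ ≤ Real.pi / 3 := by
      rw [← le_div_iff₀ hθ]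
      exact Nat.floor_le (by positivity)
    have : (n : ℝ) * θ = (⌊Real.pi / 3 / θ⌋₊ : ℝ) * θ + θ := by push_cast [hn]; ring
    rw [this]
    linarith
  have hre : ((w ^ n : Circle) : ℂ).re = Real.cos (n * θ) := by
    conv_lhs => rw [← Circle.exp_arg w]
    rw [hθdef, Circle.exp_nat_mul, Circle.coe_exp, Complex.exp_ofReal_mul_I_re]
  have hcos : Real.cos ((n : ℝ) * θ) < 1 / 2 := by
    have := Real.cos_lt_cos_of_nonneg_of_le_pi (by positivity)
      (le_trans hhigh.le (by linarith [Real.pi_pos])) hlow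
    rwa [Real.cos_pi_div_three] at this
  have := h n
  rw [hre] at this
  linarith

/-- No small subgroups in `Circle`: if all integer powers of `w` have real part `> 1/2`,
then `w = 1`. -/
lemma Circle.eq_one_of_forall_zpow (w : Circle)
    (h : ∀ m : ℤ, (1 : ℝ) / 2 < ((w ^ m : Circle) : ℂ).re) : w = 1 := by
  rcases lt_trichotomy (arg (w : ℂ)) 0 with hneg | hzero | hpos
  · exfalso
    refine aux_pos_arg w⁻¹ ?_ ?_
    · rw [Circle.coe_inv, Complex.arg_inv, if_neg (by linarith [Real.pi_pos])]
      linarith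
    · intro n
      have := h (-(n : ℤ))
      rwa [zpow_neg, zpow_natCast, ← inv_pow] at this
  · have := Circle.exp_arg w
    rw [hzero, Circle.exp_zero] at this
    exact this.symm
  · exact absurd (aux_pos_arg w hpos fun n => by
      simpa [zpow_natCast] using h (n : ℤ)) id

/-- The set of `n`-th roots of unity in `Circle` is finite. -/
lemma Circle.finite_pow_eq_one {n : ℕ} (hn : 0 < n) :
    {z : Circle | z ^ n = 1}.Finite := by
  have hfin : {w : ℂ | w ^ n = 1}.Finite := by
    have : {w : ℂ | w ^ n = 1} ⊆ (Polynomial.nthRoots n (1 : ℂ)).toFinset := by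
      intro w hw
      rw [Finset.mem_coe, Multiset.mem_toFinset, Polynomial.mem_nthRoots hn]
      exact hw
    exact Set.Finite.subset (Set.finite_mem_finset _) this
  have : {z : Circle | z ^ n = 1} ⊆ (fun z : Circle => (z : ℂ)) ⁻¹' {w : ℂ | w ^ n = 1} := by
    intro z hz
    simp only [Set.mem_preimage, Set.mem_setOf_eq]
    have : (z : Circle) ^ n = 1 := hz
    calc ((z : Circle) : ℂ) ^ n = (((z : Circle) ^ n : Circle) : ℂ) := by norm_cast
    _ = 1 := by rw [this, Circle.coe_one]
  exact Set.Finite.subset (Set.Finite.preimage (Subtype.coe_injective.injOn) hfin) this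

/-- A preconnected subset of a finite subset of a T1 space is a subsingleton. -/
lemma subsingleton_of_preconnected_of_finite {X : Type*} [TopologicalSpace X] [T1Space X]
    {t s : Set X} (hts : t ⊆ s) (hs : s.Finite) (ht : IsPreconnected t) :
    t.Subsingleton := by
  intro x hx y hy
  by_contra hxy
  have htf : t.Finite := hs.subset hts
  have hU : IsOpen ((t \ {x} : Set X)ᶜ) :=
    ((htf.subset diff_subset).isClosed).isOpen_compl
  have hV : IsOpen ({x}ᶜ : Set X) := isOpen_compl_singleton
  have hcover : t ⊆ (t \ {x})ᶜ ∪ {x}ᶜ := by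
    intro z hz
    by_cases hzx : z = x
    · left; simp [hzx]
    · right; simpa using hzx
  have hnx : (t ∩ (t \ {x})ᶜ).Nonempty := ⟨x, hx, by simp⟩
  have hny : (t ∩ {x}ᶜ).Nonempty := ⟨y, hy, by simpa using fun h => hxy h.symm⟩
  obtain ⟨z, hzt, hz1, hz2⟩ := ht _ _ hU hV hcover hnx hny
  simp only [Set.mem_compl_iff, Set.mem_diff, Set.mem_singleton_iff, not_and, not_not] at hz1 hz2
  exact hz2 (hz1 hzt)

/-- The map from `AddCircle (1 : ℚ)` to `AddCircle (1 : ℝ)`. -/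
noncomputable def ratCircleHom : AddCircle (1 : ℚ) →+ AddCircle (1 : ℝ) :=
  QuotientAddGroup.map _ _ ((Rat.castHom ℝ).toAddMonoidHom) (by
    intro x hx
    obtain ⟨k, hk⟩ := AddSubgroup.mem_zmultiples_iff.mp hx
    apply AddSubgroup.mem_comap.mpr
    apply AddSubgroup.mem_zmultiples_iff.mpr
    exact ⟨k, by push_cast [← hk]; simp⟩)

lemma ratCircleHom_injective : Function.Injective ratCircleHom := by
  intro a b hab
  induction a using QuotientAddGroup.induction_on with | H x =>
  induction b using QuotientAddGroup.induction_on with | H y =>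
  have : ((x : ℝ) : AddCircle (1 : ℝ)) = ((y : ℝ) : AddCircle (1 : ℝ)) := hab
  rw [QuotientAddGroup.eq_iff_sub_mem] at this ⊢
  obtain ⟨k, hk⟩ := AddSubgroup.mem_zmultiples_iff.mp this
  refine AddSubgroup.mem_zmultiples_iff.mpr ⟨k, ?_⟩
  have : ((k • (1 : ℚ) : ℚ) : ℝ) = ((x - y : ℚ) : ℝ) := by
    push_cast [zsmul_eq_mul] at hk ⊢
    linarith
  exact_mod_cast Rat.cast_injective this

/-- An injective map `AddCircle (1 : ℚ) → Circle` respecting the group structures. -/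
noncomputable def qCircleEmb : AddCircle (1 : ℚ) → Circle :=
  fun x => AddCircle.toCircle (ratCircleHom x)

lemma qCircleEmb_injective : Function.Injective qCircleEmb :=
  (AddCircle.injective_toCircle one_ne_zero).comp ratCircleHom_injective

lemma qCircleEmb_zero : qCircleEmb 0 = 1 := by
  unfold qCircleEmb
  rw [map_zero, AddCircle.toCircle_zero]

lemma qCircleEmb_add (x y : AddCircle (1 : ℚ)) :
    qCircleEmb (x + y) = qCircleEmb x * qCircleEmb y := by
  unfold qCircleEmb
  rw [map_add, AddCircle.toCircle_add]

/-- Every nonzero element of an abelian group is detected by some character into `Circle`. -/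
lemma exists_character_ne_one {G : Type*} [AddCommGroup G] {h : G} (hh : h ≠ 0) :
    ∃ χ : Multiplicative G →* Circle, χ (Multiplicative.ofAdd h) ≠ 1 := by
  obtain ⟨c, hc⟩ := CharacterModule.exists_character_apply_ne_zero_of_ne_zero hh
  refine ⟨{ toFun := fun x => qCircleEmb (c (Multiplicative.toAdd x))
            map_one' := by simp [qCircleEmb_zero]
            map_mul' := fun x y => by simp [qCircleEmb_add] }, ?_⟩
  simp only [MonoidHom.coe_mk, OneHom.coe_mk, toAdd_ofAdd]
  intro hcon
  rw [← qCircleEmb_zero] at hcon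
  exact hc (qCircleEmb_injective hcon)

end Helpers

/-- A discrete abelian group `G` is torsion if and only if its Pontryagin dual
(the group of characters of `G` with the compact-open topology) is profinite,
i.e. compact, Hausdorff and totally disconnected. -/
theorem torsion_iff_pontryaginDual_profinite (G : Type*) [AddCommGroup G]
    [TopologicalSpace G] [DiscreteTopology G] :
    (∀ g : G, ∃ n : ℕ, 0 < n ∧ n • g = 0) ↔
      (CompactSpace (PontryaginDual (Multiplicative G)) ∧
       T2Space (PontryaginDual (Multiplicative G)) ∧
       TotallyDisconnectedSpace (PontryaginDual (Multiplicative G))) := by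
  set A := Multiplicative G
  have hInd := isInducing_pontryaginDual_coe (A := A)
  constructor
  · intro hTor
    have hcompact : CompactSpace (PontryaginDual A) := by
      rw [← isCompact_univ_iff]
      apply hInd.isCompact_iff.mpr
      have hrange : (fun χ : PontryaginDual A => (fun a => χ a : A → Circle)) '' univ =
          {f : A → Circle | f 1 = 1 ∧ ∀ a b, f (a * b) = f a * f b} := by
        ext f
        constructor
        · rintro ⟨χ, -, rfl⟩
          exact ⟨map_one χ, fun a b => map_mul χ a b⟩
        · rintro ⟨h1, hmul⟩
          exact ⟨⟨{ toFun := f, map_one' := h1, map_mul' := hmul },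
            continuous_of_discreteTopology⟩, mem_univ _, rfl⟩
      rw [hrange]
      have hclosed : IsClosed {f : A → Circle | f 1 = 1 ∧ ∀ a b, f (a * b) = f a * f b} := by
        have heq : {f : A → Circle | f 1 = 1 ∧ ∀ a b, f (a * b) = f a * f b} =
            {f : A → Circle | f 1 = 1} ∩ ⋂ (a) (b), {f : A → Circle | f (a * b) = f a * f b} := by
          ext f
          simp [Set.mem_iInter]
        rw [heq]
        refine IsClosed.inter (isClosed_eq (continuous_apply 1) continuous_const) ?_
        refine isClosed_iInter fun a => isClosed_iInter fun b => ?_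
        exact isClosed_eq (continuous_apply (a * b))
          ((continuous_apply a).mul (continuous_apply b))
      exact hclosed.isCompact
    refine ⟨hcompact, inferInstance, ?_⟩
    refine ⟨fun t _ ht χ₁ h1 χ₂ h2 => ?_⟩
    apply ContinuousMonoidHom.ext
    intro a
    obtain ⟨n, hn, hna⟩ := hTor (Multiplicative.toAdd a)
    have himg : IsPreconnected ((fun χ : PontryaginDual A => χ a) '' t) :=
      ht.image _ (continuous_pontryaginDual_eval a).continuousOn
    have hsub : ((fun χ : PontryaginDual A => χ a) '' t) ⊆ {z : Circle | z ^ n = 1} := by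
      rintro - ⟨χ, -, rfl⟩
      show (χ a) ^ n = 1
      rw [← map_pow]
      have : a ^ n = 1 := by
        rw [← ofAdd_toAdd a, ← ofAdd_nsmul, hna, ofAdd_zero]
      rw [this, map_one]
    exact subsingleton_of_preconnected_of_finite hsub (Circle.finite_pow_eq_one hn) himg
      ⟨χ₁, h1, rfl⟩ ⟨χ₂, h2, rfl⟩
  · rintro ⟨hC, hT2, hTD⟩ g
    set a : A := Multiplicative.ofAdd g
    -- the evaluation map
    have heval : Continuous (fun χ : PontryaginDual A => χ a) :=
      continuous_pontryaginDual_eval a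
    set V : Set Circle := {z : Circle | (1 : ℝ) / 2 < (z : ℂ).re}
    have hVopen : IsOpen V := by
      have hc : Continuous fun z : Circle => (z : ℂ).re :=
        Complex.continuous_re.comp (continuous_subtype_val : Continuous ((↑) : Circle → ℂ))
      exact isOpen_lt continuous_const hc
    have hU : IsOpen ((fun χ : PontryaginDual A => χ a) ⁻¹' V) := hVopen.preimage heval
    have h1U : (1 : PontryaginDual A) ∈ (fun χ : PontryaginDual A => χ a) ⁻¹' V := by
      have h1 : ((1 : PontryaginDual A) a) = 1 := rfl
      show (1 : ℝ) / 2 < (((1 : PontryaginDual A) a : Circle) : ℂ).re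
      rw [h1, Circle.coe_one]
      norm_num
    obtain ⟨W, hWclopen, h1W, hWU⟩ := compact_exists_isClopen_in_isOpen hU h1U
    obtain ⟨N, hN⟩ := IsTopologicalGroup.exist_openNormalSubgroup_sub_clopen_nhds_of_one hWclopen h1W
    haveI : N.toSubgroup.FiniteIndex := N.toOpenSubgroup.finiteIndex_of_finite_quotient
    set k := N.toSubgroup.index with hk
    have hk0 : 0 < k := Nat.pos_of_ne_zero Subgroup.FiniteIndex.index_ne_zero
    refine ⟨k, hk0, ?_⟩
    -- every character kills k • g
    have hkill : ∀ χ : PontryaginDual A, χ (a ^ k) = 1 := by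
      intro χ
      have key : ∀ m : ℤ, ((χ (a ^ k)) ^ m : Circle) ∈ V := by
        intro m
        have hmem : (χ ^ m) ^ k ∈ N.toSubgroup := by
          have := Subgroup.pow_index_mem N.toSubgroup (χ ^ m)
          rwa [← hk] at this
        have hin : ((χ ^ m) ^ k) a ∈ V := hWU (hN hmem)
        have hL : ((χ ^ m) ^ k) a = ((χ a : Circle) ^ m) ^ k := by
          show (pontryaginDualEvalHom a) ((χ ^ m) ^ k) = _
          rw [map_pow, map_zpow]
          rfl
        have hR : (χ (a ^ k)) ^ m = ((χ a : Circle) ^ m) ^ k := by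
          rw [map_pow]
          group
        rw [hL] at hin
        rwa [hR]
      have := Circle.eq_one_of_forall_zpow (χ (a ^ k)) (fun m => key m)
      exact this
    -- conclude k • g = 0
    by_contra hne
    obtain ⟨χ₀, hχ₀⟩ := exists_character_ne_one (G := G) hne
    have : ContinuousMonoidHom A Circle := ⟨χ₀, continuous_of_discreteTopology⟩
    have hx := hkill ⟨χ₀, continuous_of_discreteTopology⟩
    apply hχ₀
    have : a ^ k = Multiplicative.ofAdd (k • g) := by
      rw [← ofAdd_nsmul]
    rw [← this]
    exact hx
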